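/- Let d ≥ 2 and let q ≡ 1 (mod d) be a prime power. Let λ ∈ F_q^* and let A ⊆ F_q^* be a set such that for all distinct a, b ∈ A, the element ab + λ is either 0 or a d-th power in F_q^*. Then |A| ≤ √(q − 11/4) + 5/2. -/

import Mathlib

open Finset Complex

/-- Existence of a nontrivial multiplicative character trivial on d-th powers. -/
lemma exists_char (F : Type*) [Field F] [Fintype F] (d : ℕ) (hd : 2 ≤ d)
    (hdvd : d ∣ Fintype.card F - 1) :
    ∃ χ : MulChar F ℂ, χ ≠ 1 ∧ ∀ x : F, x ≠ 0 → χ (x ^ d) = 1 := by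
  classical
  set H : Subgroup Fˣ := (powMonoidHom d : Fˣ →* Fˣ).range with hH
  obtain ⟨g, hg⟩ := IsCyclic.exists_generator (α := Fˣ)
  have hcard : orderOf g = Nat.card Fˣ := orderOf_eq_card_of_forall_mem_zpowers hg
  have hm : Nat.card Fˣ = Fintype.card F - 1 := by
    classical
    rw [Nat.card_eq_fintype_card, Fintype.card_units]
  -- g ∉ H
  have hgH : g ∉ H := by
    intro hmem
    have hHtop : H = ⊤ := by
      rw [eq_top_iff]
      intro x _
      obtain ⟨k, hk⟩ := hg x
      exact hk ▸ zpow_mem hmem k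
    -- then pow d is surjective hence injective
    have hsurj : Function.Surjective (fun x : Fˣ => x ^ d) := by
      intro y
      have : y ∈ H := hHtop ▸ Subgroup.mem_top y
      obtain ⟨x, hx⟩ := this
      exact ⟨x, hx⟩
    have hinj : Function.Injective (fun x : Fˣ => x ^ d) :=
      Finite.injective_iff_surjective.mpr hsurj
    -- element of order d
    have hmpos : 0 < Nat.card Fˣ := Nat.card_pos
    set m := Nat.card Fˣ with hmdef
    have hdm : d ∣ m := by rw [hm]; exact hdvd
    have h1 : (g ^ (m / d)) ^ d = 1 := by
      rw [← pow_mul, Nat.div_mul_cancel hdm, ← hcard, pow_orderOf_eq_one]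
    have h2 : g ^ (m / d) ≠ 1 := by
      intro h
      have := orderOf_dvd_of_pow_eq_one h
      rw [hcard] at this
      have hlt : m / d < m := Nat.div_lt_self hmpos (by omega)
      have h0 : 0 < m / d := Nat.div_pos (Nat.le_of_dvd hmpos hdm) (by omega)
      have hle : m ≤ m / d := Nat.le_of_dvd h0 this
      have hlt : m / d < m := Nat.div_lt_self hmpos (by omega)
      omega
    exact h2 (hinj (by simpa using h1))
  have hnormal : H.Normal := Subgroup.normal_of_comm H
  have ha : (QuotientGroup.mk g : Fˣ ⧸ H) ≠ 1 := by
    simpa [QuotientGroup.eq_one_iff] using hgH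
  have hexp : NeZero ((Monoid.exponent (Fˣ ⧸ H) : ℂ)) :=
    ⟨Nat.cast_ne_zero.mpr Monoid.exponent_ne_zero_of_finite⟩
  obtain ⟨φ, hφ⟩ := CommGroup.exists_apply_ne_one_of_hasEnoughRootsOfUnity (Fˣ ⧸ H) ℂ ha
  set ψ : Fˣ →* ℂˣ := φ.comp (QuotientGroup.mk' H) with hψ
  refine ⟨MulChar.ofUnitHom ψ, ?_, ?_⟩
  · intro h
    apply hφ
    have h2 := congrArg (fun c : MulChar F ℂ => c (g : F)) h
    simp only [MulChar.ofUnitHom_coe, MulChar.one_apply_coe] at h2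
    ext
    simpa [hψ] using h2
  · intro x hx
    have hxu : (x ^ d) = (((Units.mk0 x hx) ^ d : Fˣ) : F) := by simp
    rw [hxu, MulChar.ofUnitHom_coe]
    have hmem : ((Units.mk0 x hx) ^ d) ∈ H := ⟨Units.mk0 x hx, rfl⟩
    have : ψ ((Units.mk0 x hx) ^ d) = 1 := by
      simp only [hψ, MonoidHom.comp_apply]
      rw [show (QuotientGroup.mk' H) ((Units.mk0 x hx) ^ d) = 1 from
        (QuotientGroup.eq_one_iff _).mpr hmem, map_one]
    rw [this, Units.val_one]


section helpers

variable {F : Type*} [Field F] [Fintype F] [DecidableEq F] (χ : MulChar F ℂ)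

lemma chi_norm_one {x : F} (hx : x ≠ 0) : ‖χ x‖ = 1 := by
  have h1 : χ x ^ (Fintype.card F - 1) = 1 := by
    rw [← map_pow, FiniteField.pow_card_sub_one_eq_one x hx, map_one]
  have h2 : ‖χ x‖ ^ (Fintype.card F - 1) = 1 := by
    rw [← norm_pow, h1, norm_one]
  have h3 : Fintype.card F - 1 ≠ 0 := by
    have := Fintype.one_lt_card (α := F)
    omega
  rcases lt_trichotomy ‖χ x‖ 1 with h | h | h
  · exact absurd h2 (by have := pow_lt_one₀ (norm_nonneg (χ x)) h h3; linarith)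
  · exact h
  · exact absurd h2 (by have := one_lt_pow₀ h h3; linarith)

lemma chi_mul_conj {x : F} (hx : x ≠ 0) : χ x * (starRingEnd ℂ) (χ x) = 1 := by
  rw [Complex.mul_conj]
  norm_cast
  rw [Complex.normSq_eq_norm_sq, chi_norm_one χ hx, one_pow]

lemma conj_chi {x : F} (hx : x ≠ 0) : (starRingEnd ℂ) (χ x) = χ x⁻¹ := by
  have h1 : (starRingEnd ℂ) (χ x) = (χ x)⁻¹ :=
    eq_inv_of_mul_eq_one_left (by rw [mul_comm]; exact chi_mul_conj χ hx)
  have h2 : χ x⁻¹ = (χ x)⁻¹ :=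
    eq_inv_of_mul_eq_one_left (by rw [← map_mul, inv_mul_cancel₀ hx, map_one])
  rw [h1, h2]

end helpers

section sums

variable {F : Type*} [Field F] [Fintype F] [DecidableEq F] (χ : MulChar F ℂ)

lemma sum_aux (hχ : χ ≠ 1) {r s : F} (hr : r ≠ 0) (hs : s ≠ 0) :
    ∑ x : F, χ (r * x + s) * (starRingEnd ℂ) (χ x) = - χ r := by
  rw [← Finset.sum_erase_add Finset.univ _ (Finset.mem_univ (0 : F))]
  rw [show χ (r * 0 + s) * (starRingEnd ℂ) (χ 0) = 0 by
    rw [MulChar.map_zero]; simp]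
  rw [add_zero]
  have hstep : ∀ x ∈ Finset.univ.erase (0 : F),
      χ (r * x + s) * (starRingEnd ℂ) (χ x) = χ (r + s * x⁻¹) := by
    intro x hx
    have hx0 : x ≠ 0 := (Finset.mem_erase.mp hx).1
    rw [conj_chi χ hx0, ← map_mul]
    congr 1
    field_simp
  rw [Finset.sum_congr rfl hstep]
  have hbij : ∑ x ∈ Finset.univ.erase (0 : F), χ (r + s * x⁻¹)
      = ∑ y ∈ Finset.univ.erase r, χ y := by
    apply Finset.sum_nbij' (fun x => r + s * x⁻¹) (fun y => s * (y - r)⁻¹)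
    · intro x hx
      have hx0 : x ≠ 0 := (Finset.mem_erase.mp hx).1
      simp only [Finset.mem_erase, Finset.mem_univ, and_true]
      intro h
      have : s * x⁻¹ = 0 := by linear_combination h
      rcases mul_eq_zero.mp this with h' | h'
      · exact hs h'
      · exact hx0 (inv_eq_zero.mp h')
    · intro y hy
      have hy0 : y ≠ r := (Finset.mem_erase.mp hy).1
      simp only [Finset.mem_erase, Finset.mem_univ, and_true]
      intro h
      rcases mul_eq_zero.mp h with h' | h'
      · exact hs h'
      · exact hy0 (by
          have := inv_eq_zero.mp h'
          have := sub_eq_zero.mp this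
          exact this)
    · intro x hx
      have hx0 : x ≠ 0 := (Finset.mem_erase.mp hx).1
      rw [add_sub_cancel_left, mul_inv, inv_inv, ← mul_assoc, mul_inv_cancel₀ hs, one_mul]
    · intro y hy
      have hy0 : y - r ≠ 0 := sub_ne_zero.mpr (Finset.mem_erase.mp hy).1
      rw [mul_inv, inv_inv, ← mul_assoc, mul_inv_cancel₀ hs, one_mul, add_sub_cancel]
    · intro x hx
      rfl
  rw [hbij]
  have h0 : ∑ y ∈ Finset.univ.erase r, χ y + χ r = 0 := by
    rw [Finset.sum_erase_add Finset.univ _ (Finset.mem_univ r)]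
    exact MulChar.sum_eq_zero_of_ne_one hχ
  linear_combination h0

lemma cross_sum (hχ : χ ≠ 1) {b b' lam : F} (hb : b ≠ 0) (hb' : b' ≠ 0) (hne : b ≠ b')
    (hlam : lam ≠ 0) :
    ∑ a : F, χ (a * b + lam) * (starRingEnd ℂ) (χ (a * b' + lam))
      = -(χ b * (starRingEnd ℂ) (χ b')) := by
  have hR : b * b'⁻¹ ≠ 0 := mul_ne_zero hb (inv_ne_zero hb')
  have hS : lam - lam * (b * b'⁻¹) ≠ 0 := by
    intro h
    apply hne
    have h1 : lam * (1 - b * b'⁻¹) = 0 := by ring_nf; linear_combination h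
    rcases mul_eq_zero.mp h1 with h' | h'
    · exact absurd h' hlam
    · have : b * b'⁻¹ = 1 := by linear_combination -h'
      field_simp at this
      exact this
  have hre : ∑ a : F, χ (a * b + lam) * (starRingEnd ℂ) (χ (a * b' + lam))
      = ∑ x : F, χ ((b * b'⁻¹) * x + (lam - lam * (b * b'⁻¹))) * (starRingEnd ℂ) (χ x) := by
    apply Fintype.sum_bijective (fun a : F => a * b' + lam)
      (((Equiv.mulRight₀ b' hb').trans (Equiv.addRight lam)).bijective)
    intro a
    congr 2
    field_simp
    ring
  rw [hre, sum_aux χ hχ hR hS]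
  congr 1
  rw [map_mul, conj_chi χ hb']

lemma same_sum {b lam : F} (hb : b ≠ 0) :
    ∑ a : F, χ (a * b + lam) * (starRingEnd ℂ) (χ (a * b + lam))
      = ((Fintype.card F : ℂ) - 1) := by
  have hre : ∑ a : F, χ (a * b + lam) * (starRingEnd ℂ) (χ (a * b + lam))
      = ∑ x : F, χ x * (starRingEnd ℂ) (χ x) := by
    apply Fintype.sum_bijective (fun a : F => a * b + lam)
      (((Equiv.mulRight₀ b hb).trans (Equiv.addRight lam)).bijective)
    intro a
    rfl
  rw [hre]
  rw [← Finset.sum_erase_add Finset.univ _ (Finset.mem_univ (0 : F))]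
  rw [show χ (0 : F) * (starRingEnd ℂ) (χ 0) = 0 by rw [MulChar.map_zero]; simp]
  rw [add_zero]
  have hstep : ∀ x ∈ Finset.univ.erase (0 : F), χ x * (starRingEnd ℂ) (χ x) = 1 := by
    intro x hx
    exact chi_mul_conj χ (Finset.mem_erase.mp hx).1
  rw [Finset.sum_congr rfl hstep, Finset.sum_const, Finset.card_erase_of_mem (Finset.mem_univ _),
    Finset.card_univ, nsmul_eq_mul]
  have : (1:ℕ) ≤ Fintype.card F := Fintype.card_pos
  rw [Nat.cast_sub this]
  simp

lemma variance_sum (hχ : χ ≠ 1) (A : Finset F) (hA0 : (0 : F) ∉ A) {lam : F} (hlam : lam ≠ 0) :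
    ∑ a : F, ((∑ b ∈ A, χ (a * b + lam)) * (starRingEnd ℂ) (∑ b ∈ A, χ (a * b + lam)))
      = (A.card : ℂ) * (Fintype.card F : ℂ)
        - (∑ b ∈ A, χ b) * (starRingEnd ℂ) (∑ b ∈ A, χ b) := by
  have expand : ∀ a : F, (∑ b ∈ A, χ (a * b + lam)) * (starRingEnd ℂ) (∑ b ∈ A, χ (a * b + lam))
      = ∑ b ∈ A, ∑ b' ∈ A, χ (a * b + lam) * (starRingEnd ℂ) (χ (a * b' + lam)) := by
    intro a
    rw [map_sum, Finset.sum_mul_sum]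
  simp_rw [expand]
  have swap : ∑ a : F, ∑ b ∈ A, ∑ b' ∈ A, χ (a * b + lam) * (starRingEnd ℂ) (χ (a * b' + lam))
      = ∑ b ∈ A, ∑ b' ∈ A, ∑ a : F, χ (a * b + lam) * (starRingEnd ℂ) (χ (a * b' + lam)) := by
    rw [Finset.sum_comm]
    exact Finset.sum_congr rfl fun b _ => Finset.sum_comm
  rw [swap]
  have key : ∀ b ∈ A, ∀ b' ∈ A,
      ∑ a : F, χ (a * b + lam) * (starRingEnd ℂ) (χ (a * b' + lam))
        = -(χ b * (starRingEnd ℂ) (χ b')) + (if b' = b then (Fintype.card F : ℂ) else 0) := by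
    intro b hb b' hb'
    have hb0 : b ≠ 0 := fun h => hA0 (h ▸ hb)
    have hb'0 : b' ≠ 0 := fun h => hA0 (h ▸ hb')
    by_cases h : b' = b
    · subst h
      rw [same_sum χ hb'0 (lam := lam), if_pos rfl, chi_mul_conj χ hb'0]
      ring
    · rw [cross_sum χ hχ hb0 hb'0 (fun hh => h hh.symm) hlam, if_neg h, add_zero]
  rw [Finset.sum_congr rfl fun b hb => Finset.sum_congr rfl fun b' hb' => key b hb b' hb']
  have h2 : ∀ b ∈ A, ∑ b' ∈ A,
      (-(χ b * (starRingEnd ℂ) (χ b')) + (if b' = b then (Fintype.card F : ℂ) else 0))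
      = -(χ b * (starRingEnd ℂ) (∑ b' ∈ A, χ b')) + (Fintype.card F : ℂ) := by
    intro b hb
    rw [Finset.sum_add_distrib, Finset.sum_ite_eq' A b (fun _ => (Fintype.card F : ℂ)),
      if_pos hb]
    congr 1
    rw [map_sum, Finset.mul_sum, ← Finset.sum_neg_distrib]
  rw [Finset.sum_congr rfl h2, Finset.sum_add_distrib, Finset.sum_const, nsmul_eq_mul]
  have h3 : ∑ b ∈ A, -(χ b * (starRingEnd ℂ) (∑ b' ∈ A, χ b'))
      = -((∑ b ∈ A, χ b) * (starRingEnd ℂ) (∑ b ∈ A, χ b)) := by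
    rw [Finset.sum_mul, ← Finset.sum_neg_distrib]
  rw [h3]
  ring

end sums

/-- trivial upper bound for Diophantine tuples over finite fields. -/
theorem diophantine_trivial_bound
    (d : ℕ) (hd : 2 ≤ d) (F : Type*) [Field F] [Fintype F]
    (hq : Fintype.card F % d = 1)
    (lam : F) (hlam : lam ≠ 0)
    (A : Finset F) (hA0 : (0 : F) ∉ A)
    (hprop : ∀ a ∈ A, ∀ b ∈ A, a ≠ b →
      a * b + lam = 0 ∨ ∃ x : F, x ≠ 0 ∧ x ^ d = a * b + lam) :
    (A.card : ℝ) ≤ Real.sqrt ((Fintype.card F : ℝ) - 11 / 4) + 5 / 2 := by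
  classical
  set q := Fintype.card F with hqdef
  have hq2 : 2 ≤ q := Fintype.one_lt_card
  have hdvd : d ∣ q - 1 := by
    have h := Nat.mod_add_div q d
    exact ⟨q / d, by omega⟩
  have hq3 : 3 ≤ q := by
    have := Nat.le_of_dvd (by omega) hdvd
    omega
  set n := A.card with hndef
  by_cases hn3 : n ≤ 3
  · -- small case
    have h1 : (1:ℝ)/2 ≤ Real.sqrt ((q:ℝ) - 11/4) := by
      have : ((1:ℝ)/2)^2 ≤ (q:ℝ) - 11/4 := by
        have : (3:ℝ) ≤ (q:ℝ) := by exact_mod_cast hq3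
        nlinarith
      calc (1:ℝ)/2 = Real.sqrt (((1:ℝ)/2)^2) := by
            rw [Real.sqrt_sq (by norm_num)]
        _ ≤ Real.sqrt ((q:ℝ) - 11/4) := Real.sqrt_le_sqrt this
    have : (n:ℝ) ≤ 3 := by exact_mod_cast hn3
    linarith
  push_neg at hn3
  have hn4 : 4 ≤ n := hn3
  obtain ⟨χ, hχ1, hχd⟩ := exists_char F d hd hdvd
  set u : F → ℂ := fun a => ∑ b ∈ A, χ (a * b + lam) with hu
  set T : ℂ := ∑ a ∈ A, u a with hT
  -- lower bound on the real part
  have hTre : (n:ℝ)^2 - 3*(n:ℝ) ≤ T.re := by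
    have hre : T.re = ∑ a ∈ A, (u a).re := by
      rw [hT, Complex.re_sum]
    rw [hre]
    have hper : ∀ a ∈ A, (n:ℝ) - 3 ≤ (u a).re := by
      intro a ha
      have ha0 : a ≠ 0 := fun h => hA0 (h ▸ ha)
      have hua : (u a).re = ∑ b ∈ A, (χ (a * b + lam)).re := by
        rw [hu, Complex.re_sum]
      rw [hua]
      set c : F := -lam * a⁻¹ with hc
      have hval : ∀ b ∈ A, b ≠ a → (χ (a * b + lam)).re = 0 ∨ (χ (a * b + lam)).re = 1 := by
        intro b hb hba
        rcases hprop a ha b hb (fun h => hba h.symm) with h | ⟨x, hx0, hxd⟩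
        · left; rw [h, MulChar.map_zero]; simp
        · right; rw [← hxd, hχd x hx0]; simp
      have hone : ∀ b ∈ (A.erase a).erase c, (χ (a * b + lam)).re = 1 := by
        intro b hb
        have hbc : b ≠ c := (Finset.mem_erase.mp hb).1
        have hba : b ≠ a := (Finset.mem_erase.mp (Finset.mem_erase.mp hb).2).1
        have hbA : b ∈ A := (Finset.mem_erase.mp (Finset.mem_erase.mp hb).2).2
        rcases hprop a ha b hbA (fun h => hba h.symm) with h | ⟨x, hx0, hxd⟩
        · exfalso
          apply hbc
          rw [hc]
          field_simp
          linear_combination h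
        · rw [← hxd, hχd x hx0]; simp
      have hsplit : ∑ b ∈ A, (χ (a * b + lam)).re
          = ∑ b ∈ A.erase a, (χ (a * b + lam)).re + (χ (a * a + lam)).re := by
        rw [Finset.sum_erase_add]
        exact ha
      rw [hsplit]
      have hlow1 : ((n:ℝ) - 2) ≤ ∑ b ∈ A.erase a, (χ (a * b + lam)).re := by
        have hsub : (A.erase a).erase c ⊆ A.erase a := Finset.erase_subset _ _
        have hnn : ∀ b ∈ A.erase a, 0 ≤ (χ (a * b + lam)).re := by
          intro b hb
          rcases hval b (Finset.mem_of_mem_erase hb) (Finset.ne_of_mem_erase hb) with h | h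
          · rw [h]
          · rw [h]; norm_num
        have h1 : ∑ b ∈ (A.erase a).erase c, (χ (a * b + lam)).re
            ≤ ∑ b ∈ A.erase a, (χ (a * b + lam)).re :=
          Finset.sum_le_sum_of_subset_of_nonneg hsub (fun b hb _ => hnn b hb)
        have h2 : ∑ b ∈ (A.erase a).erase c, (χ (a * b + lam)).re
            = ((A.erase a).erase c).card := by
          rw [Finset.sum_congr rfl hone, Finset.sum_const, nsmul_eq_mul, mul_one]
        have h3 : (n:ℝ) - 2 ≤ (((A.erase a).erase c).card : ℝ) := by
          have e1 : A.card - 1 ≤ (A.erase a).card := by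
            rw [Finset.card_erase_of_mem ha]
          have e2 : (A.erase a).card - 1 ≤ ((A.erase a).erase c).card :=
            Finset.pred_card_le_card_erase
          have e3 : n - 2 ≤ ((A.erase a).erase c).card := by omega
          have : ((n - 2 : ℕ) : ℝ) ≤ (((A.erase a).erase c).card : ℝ) := by
            exact_mod_cast e3
          calc (n:ℝ) - 2 ≤ ((n - 2 : ℕ) : ℝ) := by
                have : (2:ℕ) ≤ n := by omega
                push_cast [Nat.cast_sub this]
                linarith
            _ ≤ _ := this
        linarith
      have hlow2 : (-1 : ℝ) ≤ (χ (a * a + lam)).re := by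
        by_cases hz : a * a + lam = 0
        · rw [hz, MulChar.map_zero]; simp
        · have hnorm : ‖χ (a * a + lam)‖ = 1 := chi_norm_one χ hz
          have := Complex.abs_re_le_norm (χ (a * a + lam))
          rw [hnorm] at this
          have := neg_abs_le ((χ (a * a + lam)).re)
          linarith [abs_nonneg ((χ (a * a + lam)).re)]
      linarith
    calc (n:ℝ)^2 - 3*(n:ℝ) = ∑ _a ∈ A, ((n:ℝ) - 3) := by
          rw [Finset.sum_const, nsmul_eq_mul]
          ring
      _ ≤ ∑ a ∈ A, (u a).re := Finset.sum_le_sum hper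
  -- upper bound chain
  have hc2 : T.re ≤ ‖T‖ := by
    exact Complex.re_le_norm T
  have hc3 : ‖T‖ ≤ ∑ a ∈ A, ‖u a‖ := norm_sum_le A u
  have hc4 : (∑ a ∈ A, ‖u a‖)^2 ≤ (n:ℝ) * ∑ a ∈ A, ‖u a‖^2 := by
    have := sq_sum_le_card_mul_sum_sq (s := A) (f := fun a => ‖u a‖)
    exact_mod_cast this
  have hc6 : ‖u 0‖^2 = (n:ℝ)^2 := by
    have h0 : u 0 = (n:ℂ) * χ lam := by
      rw [hu]
      simp [Finset.sum_const, hndef]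
    rw [h0, norm_mul, Complex.norm_natCast, chi_norm_one χ hlam, mul_one]
  have hc5 : ∑ a : F, ‖u a‖^2 ≤ (n:ℝ) * (q:ℝ) := by
    have hv := variance_sum χ hχ1 A hA0 hlam
    have hre := congrArg Complex.re hv
    have hL : (∑ a : F, ((∑ b ∈ A, χ (a * b + lam)) *
        (starRingEnd ℂ) (∑ b ∈ A, χ (a * b + lam)))).re = ∑ a : F, ‖u a‖^2 := by
      rw [Complex.re_sum]
      apply Finset.sum_congr rfl
      intro a _
      rw [show (∑ b ∈ A, χ (a * b + lam)) = u a from rfl, Complex.mul_conj,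
        Complex.ofReal_re, Complex.normSq_eq_norm_sq]
    have hR : (((A.card : ℂ) * (Fintype.card F : ℂ))
        - (∑ b ∈ A, χ b) * (starRingEnd ℂ) (∑ b ∈ A, χ b)).re
        = (n:ℝ) * (q:ℝ) - Complex.normSq (∑ b ∈ A, χ b) := by
      rw [Complex.sub_re, Complex.mul_conj]
      norm_num
      rfl
    rw [hL, hR] at hre
    have := Complex.normSq_nonneg (∑ b ∈ A, χ b)
    linarith
  have hc7 : ∑ a ∈ A, ‖u a‖^2 ≤ (n:ℝ) * (q:ℝ) - (n:ℝ)^2 := by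
    have hsub : A ⊆ Finset.univ.erase (0:F) :=
      fun x hx => Finset.mem_erase.mpr ⟨fun h => hA0 (h ▸ hx), Finset.mem_univ x⟩
    have h1 : ∑ a ∈ A, ‖u a‖^2 ≤ ∑ a ∈ Finset.univ.erase (0:F), ‖u a‖^2 :=
      Finset.sum_le_sum_of_subset_of_nonneg hsub (fun b _ _ => sq_nonneg _)
    have h2 : ∑ a ∈ Finset.univ.erase (0:F), ‖u a‖^2 + ‖u 0‖^2 = ∑ a : F, ‖u a‖^2 :=
      Finset.sum_erase_add Finset.univ _ (Finset.mem_univ (0:F))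
    rw [hc6] at h2
    linarith
  -- combine
  set x : ℝ := (n:ℝ) with hx
  have hx4 : (4:ℝ) ≤ x := by rw [hx]; exact_mod_cast hn4
  have hs1nn : (0:ℝ) ≤ ∑ a ∈ A, ‖u a‖ := Finset.sum_nonneg fun a _ => norm_nonneg _
  have hkey : (x^2 - 3*x)^2 ≤ x^2 * ((q:ℝ) - x) := by
    have h1 : x^2 - 3*x ≤ ∑ a ∈ A, ‖u a‖ := by linarith
    have h2 : (x^2 - 3*x)^2 ≤ (∑ a ∈ A, ‖u a‖)^2 := by
      apply sq_le_sq' <;> nlinarith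
    nlinarith
  have hq' : (x - 5/2)^2 ≤ (q:ℝ) - 11/4 := by
    have hx2 : (0:ℝ) < x^2 := by nlinarith
    have hh : x^2 * (x-3)^2 ≤ x^2 * ((q:ℝ) - x) := by
      have he : x^2 * (x-3)^2 = (x^2 - 3*x)^2 := by ring
      rw [he]; exact hkey
    have h1 : (x-3)^2 ≤ (q:ℝ) - x := le_of_mul_le_mul_left hh hx2
    nlinarith
  have hfin : x - 5/2 ≤ Real.sqrt ((q:ℝ) - 11/4) := by
    calc x - 5/2 = Real.sqrt ((x - 5/2)^2) := by
          rw [Real.sqrt_sq (by linarith)]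
      _ ≤ Real.sqrt ((q:ℝ) - 11/4) := Real.sqrt_le_sqrt hq'
  linarith
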